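/- Consider the planar system ẋ = f(x) + u g(x) on ℝ² with f(x) := (a(x₁,x₂), a(x₁,x₂))ᵀ and g(x) := (x₁, −x₂)ᵀ, where a : ℝ² → ℝ is C¹ and satisfies a(0,0) = 0, x₁·a(x₁,x₁) < 0 for every x₁ ≠ 0, and a(x₁,−x₁) ≠ 0 for every x₁ ≠ 0. Then condition (3.1) holds with Φ(x) = ½(x₁² + x₂²): for every x ≠ 0 with (gΦ)(x) = 0, either (fΦ)(x) < 0, or (fΦ)(x) = 0 and ([f,g]Φ)(x) ≠ 0. -/

import Mathlib

open Filter Set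

noncomputable section

/-- Example 1: for the planar system with `f(x) = (a(x₁,x₂), a(x₁,x₂))ᵀ`,
`g(x) = (x₁, −x₂)ᵀ`, where `a` is `C¹` with `a(0,0) = 0`, `x₁·a(x₁,x₁) < 0` for `x₁ ≠ 0`
and `a(x₁,−x₁) ≠ 0` for `x₁ ≠ 0`, condition (3.1) holds with `Φ(x) = ½(x₁² + x₂²)`. -/
theorem example1 (a : ℝ × ℝ → ℝ) (ha : ContDiff ℝ 1 a)
    (ha0 : a (0, 0) = 0)
    (ha1 : ∀ x₁ : ℝ, x₁ ≠ 0 → x₁ * a (x₁, x₁) < 0)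
    (ha2 : ∀ x₁ : ℝ, x₁ ≠ 0 → a (x₁, -x₁) ≠ 0)
    (f g : ℝ × ℝ → ℝ × ℝ)
    (hfdef : f = fun p => (a p, a p))
    (hgdef : g = fun p => (p.1, -p.2))
    (Φ : ℝ × ℝ → ℝ)
    (hΦdef : Φ = fun p => (p.1 ^ 2 + p.2 ^ 2) / 2) :
    ∀ p : ℝ × ℝ, p ≠ 0 → fderiv ℝ Φ p (g p) = 0 →
      (fderiv ℝ Φ p (f p) < 0 ∨
        (fderiv ℝ Φ p (f p) = 0 ∧
          fderiv ℝ Φ p (fderiv ℝ g p (f p) - fderiv ℝ f p (g p)) ≠ 0)) := by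
  subst hfdef hgdef hΦdef
  have hda : Differentiable ℝ a := ha.differentiable one_ne_zero
  -- derivative of Φ
  have keyΦ : ∀ p v : ℝ × ℝ,
      fderiv ℝ (fun p : ℝ × ℝ => (p.1 ^ 2 + p.2 ^ 2) / 2) p v = p.1 * v.1 + p.2 * v.2 := by
    intro p v
    have hfun : (fun p : ℝ × ℝ => (p.1 ^ 2 + p.2 ^ 2) / 2)
        = fun p : ℝ × ℝ => (1/2 : ℝ) * (p.1 * p.1) + (1/2 : ℝ) * (p.2 * p.2) := by
      funext q; ring
    rw [hfun]
    have hf1 : HasFDerivAt (fun q : ℝ × ℝ => q.1) (ContinuousLinearMap.fst ℝ ℝ ℝ) p :=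
      hasFDerivAt_fst
    have hf2 : HasFDerivAt (fun q : ℝ × ℝ => q.2) (ContinuousLinearMap.snd ℝ ℝ ℝ) p :=
      hasFDerivAt_snd
    have h1 := (hf1.mul hf1).const_mul (1/2 : ℝ)
    have h2 := (hf2.mul hf2).const_mul (1/2 : ℝ)
    rw [(show HasFDerivAt (fun p : ℝ × ℝ => (1/2 : ℝ) * (p.1 * p.1) + (1/2 : ℝ) * (p.2 * p.2)) _ p from h1.add h2).fderiv]
    simp [ContinuousLinearMap.smul_apply]
    ring
  -- derivative of g
  have keyg : ∀ p v : ℝ × ℝ,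
      fderiv ℝ (fun p : ℝ × ℝ => (p.1, -p.2)) p v = (v.1, -v.2) := by
    intro p v
    have h : HasFDerivAt (fun p : ℝ × ℝ => (p.1, -p.2))
        ((ContinuousLinearMap.fst ℝ ℝ ℝ).prod (-(ContinuousLinearMap.snd ℝ ℝ ℝ))) p :=
      ((ContinuousLinearMap.fst ℝ ℝ ℝ).prod
        (-(ContinuousLinearMap.snd ℝ ℝ ℝ))).hasFDerivAt
    rw [h.fderiv]; rfl
  -- derivative of f
  have keyf : ∀ p v : ℝ × ℝ,
      fderiv ℝ (fun p : ℝ × ℝ => (a p, a p)) p v = (fderiv ℝ a p v, fderiv ℝ a p v) := by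
    intro p v
    have h : HasFDerivAt (fun p : ℝ × ℝ => (a p, a p))
        ((fderiv ℝ a p).prod (fderiv ℝ a p)) p :=
      HasFDerivAt.prodMk ((hda p).hasFDerivAt) ((hda p).hasFDerivAt)
    rw [h.fderiv]; rfl
  intro p hp hg
  rw [keyΦ] at hg
  simp only at hg
  have hcase : p.2 = p.1 ∨ p.2 = -p.1 := by
    have : (p.1 - p.2) * (p.1 + p.2) = 0 := by nlinarith
    rcases mul_eq_zero.1 this with h | h
    · left; linarith
    · right; linarith
  have hp1 : p.1 ≠ 0 := by
    intro h0
    apply hp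
    rcases hcase with h | h <;> exact Prod.ext h0 (by simp [h, h0])
  have hpe : p = (p.1, p.2) := rfl
  rcases hcase with h | h
  · left
    rw [keyΦ]
    have := ha1 p.1 hp1
    have hap : a p = a (p.1, p.1) := by rw [hpe, h]
    simp only [hap, h]
    nlinarith
  · right
    have hap : a p = a (p.1, -p.1) := by rw [hpe, h]
    constructor
    · rw [keyΦ]; simp only; rw [h]; ring
    · rw [keyΦ, keyg, keyf]
      simp only [Prod.fst_sub, Prod.snd_sub]
      intro hcon
      rw [h, hap] at hcon
      have h2 : p.1 * a (p.1, -p.1) = 0 := by linear_combination hcon / 2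
      exact ha2 p.1 hp1 ((mul_eq_zero.1 h2).resolve_left hp1)
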